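/- arXiv:0905.0796 — 2 statements merged into one kernel-verified Lean document; each statement's English description precedes it below -/
import Mathlib

section
/- Let x_η denote the R_η-minimizing solution of Kx = y†, and let ‖x_0‖_{ℓ²} = lim_{η→0} ‖x_η‖_{ℓ²} and ‖x_∞‖_{ℓ²} = lim_{η→∞} ‖x_η‖_{ℓ²} (these limits exist since η ↦ ‖x_η‖_{ℓ²} is monotone and bounded). If ‖x_∞‖_{ℓ²} > ‖x_0‖_{ℓ²}, then there exists a set C ⊂ (0, ∞) of positive Lebesgue measure such that for each η ∈ C the function η ↦ ‖x_η‖_{ℓ²} is differentiable at η with strictly positive derivative. -/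
noncomputable section

open Filter Topology MeasureTheory

/-- `ℓ²(ℕ, ℝ)`. -/
abbrev ltwo : Type := lp (fun _ : ℕ => ℝ) 2

/-- `x ∈ ℓ¹`. -/
def inL1 (x : ltwo) : Prop := Memℓp (fun i => x i) 1

/-- The `ℓ¹`-norm `‖x‖_{ℓ¹} = ∑ |xᵢ|` (junk value if `x ∉ ℓ¹`). -/
noncomputable def l1norm (x : ltwo) : ℝ := ∑' i, |x i|

/-- The functional `R_η(x) = η‖x‖₁ + ½‖x‖₂²` (finite on `ℓ¹ ∩ ℓ²`). -/
noncomputable def Rfun (η : ℝ) (x : ltwo) : ℝ := η * l1norm x + (1 / 2) * ‖x‖ ^ 2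

/-- `x†` is the `R_η`-minimizing solution of `Kx = y†`: it solves the equation and
minimizes `R_η` among all solutions in `ℓ¹ ∩ ℓ²`. -/
def IsRMinSolution {H : Type*} [NormedAddCommGroup H] [InnerProductSpace ℝ H]
    (K : ltwo →L[ℝ] H) (ydag : H) (η : ℝ) (xdag : ltwo) : Prop :=
  inL1 xdag ∧ K xdag = ydag ∧
    ∀ z : ltwo, inL1 z → K z = ydag → Rfun η xdag ≤ Rfun η z

/-- An `ℓ¹` element has summable absolute values. -/
lemma inL1_summable {x : ltwo} (h : inL1 x) : Summable (fun i => |x i|) := by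
  have := Memℓp.summable (p := 1) (by norm_num) h
  simpa [Real.norm_eq_abs] using this

/-- The midpoint of two `ℓ¹` elements is in `ℓ¹`. -/
lemma inL1_midpoint {x y : ltwo} (hx : inL1 x) (hy : inL1 y) :
    inL1 ((2⁻¹ : ℝ) • (x + y)) := by
  have hcoe : (fun i => ((2⁻¹ : ℝ) • (x + y) : ltwo) i)
      = (2⁻¹ : ℝ) • ((fun i => x i) + fun i => y i) := by
    funext i
    simp only [lp.coeFn_smul, lp.coeFn_add, Pi.smul_apply, Pi.add_apply, smul_eq_mul]
  unfold inL1
  rw [hcoe]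
  exact (hx.add hy).const_smul _

/-- `ℓ¹`-norm bound for the midpoint. -/
lemma l1norm_midpoint {x y : ltwo} (hx : inL1 x) (hy : inL1 y) :
    l1norm ((2⁻¹ : ℝ) • (x + y)) ≤ (l1norm x + l1norm y) / 2 := by
  have hsx := inL1_summable hx
  have hsy := inL1_summable hy
  have hz := inL1_summable (inL1_midpoint hx hy)
  have hval : ∀ i, ((2⁻¹ : ℝ) • (x + y) : ltwo) i = 2⁻¹ * (x i + y i) := by
    intro i
    simp only [lp.coeFn_smul, lp.coeFn_add, Pi.smul_apply, Pi.add_apply, smul_eq_mul]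
  have hbound : ∀ i, |((2⁻¹ : ℝ) • (x + y) : ltwo) i| ≤ (|x i| + |y i|) / 2 := by
    intro i
    rw [hval i]
    have := abs_add_le (x i) (y i)
    rw [abs_mul]
    rw [show |(2⁻¹ : ℝ)| = 2⁻¹ by norm_num]
    linarith
  have hsum2 : Summable (fun i => (|x i| + |y i|) / 2) := (hsx.add hsy).div_const 2
  have h1 : l1norm ((2⁻¹ : ℝ) • (x + y)) ≤ ∑' i, (|x i| + |y i|) / 2 :=
    Summable.tsum_le_tsum hbound hz hsum2
  calc l1norm ((2⁻¹ : ℝ) • (x + y)) ≤ ∑' i, (|x i| + |y i|) / 2 := h1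
    _ = (l1norm x + l1norm y) / 2 := by
        rw [tsum_div_const, Summable.tsum_add hsx hsy]; rfl

/-- Pure arithmetic core of the strong-convexity estimate. -/
lemma parallelogram_arith (e1 e2 g1 g2 l n1 n2 P D q : ℝ) (h1 : 0 ≤ e1) (h2 : 0 ≤ e2)
    (hm1 : e1 * g1 + 1/2 * n1^2 ≤ e1 * l + 1/2 * q^2)
    (hm2 : e2 * g2 + 1/2 * n2^2 ≤ e2 * l + 1/2 * q^2)
    (hl : l ≤ (g1 + g2) / 2)
    (hq : 2 * q = P)
    (hpar : P * P + D * D = 2 * (n1 * n1 + n2 * n2)) :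
    D^2 ≤ 2 * (e2 - e1) * (g1 - g2) := by
  have hq2 : P * P = 4 * q^2 := by rw [← hq]; ring
  nlinarith [hq2, mul_le_mul_of_nonneg_left hl h1, mul_le_mul_of_nonneg_left hl h2]

/-- Pure arithmetic core of the Lipschitz estimate. -/
lemma lip_arith (η1 η2 w g1 g2 f1 f2 Linf aa : ℝ)
    (hD : w^2 ≤ 2 * (η2 - η1) * (g1 - g2))
    (habs : f2 - f1 ≤ w)
    (hgf : η1 * g1 + 1/2 * f1^2 ≤ η1 * g2 + 1/2 * f2^2)
    (hfm : f1 ≤ f2) (hf2 : f2 ≤ Linf) (hf1n : 0 ≤ f1)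
    (ha : 0 < aa) (hη1 : aa ≤ η1) (h12 : η1 ≤ η2) (hg : g2 ≤ g1) :
    (f2 - f1) * aa ≤ 2 * Linf * (η2 - η1) := by
  rcases le_or_gt (f2 - f1) 0 with hle0 | hpos
  · nlinarith
  · have hη1pos : 0 < η1 := lt_of_lt_of_le ha hη1
    have hsq : (f2 - f1)^2 ≤ 2 * (η2 - η1) * (g1 - g2) := by nlinarith
    have h3 : η1 * (g1 - g2) ≤ (f2 - f1) * Linf := by nlinarith
    have h4 : (f2 - f1)^2 * η1 ≤ 2 * (η2 - η1) * ((f2 - f1) * Linf) := by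
      nlinarith [mul_le_mul_of_nonneg_left hsq hη1pos.le,
        mul_le_mul_of_nonneg_left h3 (show (0:ℝ) ≤ 2 * (η2 - η1) by linarith)]
    have h5 : (f2 - f1) * η1 ≤ 2 * (η2 - η1) * Linf := by
      have h6 : (f2 - f1) * ((f2 - f1) * η1) ≤ (f2 - f1) * (2 * (η2 - η1) * Linf) := by
        linear_combination h4
      exact (mul_le_mul_iff_right₀ hpos).1 h6
    have h7 : (f2 - f1) * aa ≤ (f2 - f1) * η1 :=
      mul_le_mul_of_nonneg_left hη1 hpos.le
    linarith

set_option maxHeartbeats 1000000 in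
/-- If `lim_{η→∞}‖x_η‖₂ > lim_{η→0}‖x_η‖₂` then there is a set `C ⊆ (0,∞)` of positive
Lebesgue measure on which `η ↦ ‖x_η‖₂` is differentiable with strictly positive
derivative (i.e. strictly increasing there). -/
theorem RMinSolution_norm_strictly_increasing_on_positive_measure_set
    {H : Type*} [NormedAddCommGroup H] [InnerProductSpace ℝ H]
    (K : ltwo →L[ℝ] H) (ydag : H)
    (xsol : ℝ → ltwo) (hxsol : ∀ η : ℝ, 0 ≤ η → IsRMinSolution K ydag η (xsol η))
    (L0 Linf : ℝ)
    (hL0 : Tendsto (fun η => ‖xsol η‖) (nhdsWithin 0 (Set.Ioi 0)) (nhds L0))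
    (hLinf : Tendsto (fun η => ‖xsol η‖) atTop (nhds Linf))
    (hlt : L0 < Linf) :
    ∃ C : Set ℝ, C ⊆ Set.Ioi 0 ∧ 0 < MeasureTheory.volume C ∧
      ∀ η ∈ C, ∃ d : ℝ, 0 < d ∧ HasDerivAt (fun t : ℝ => ‖xsol t‖) d η := by
  classical
  set f : ℝ → ℝ := fun t => ‖xsol t‖ with hf_def
  set g : ℝ → ℝ := fun t => l1norm (xsol t) with hg_def
  -- basic minimality comparison
  have hA : ∀ η1 η2 : ℝ, 0 ≤ η1 → 0 ≤ η2 →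
      η1 * g η1 + (1/2) * (f η1)^2 ≤ η1 * g η2 + (1/2) * (f η2)^2 := by
    intro η1 η2 h1 h2
    have := (hxsol η1 h1).2.2 (xsol η2) (hxsol η2 h2).1 (hxsol η2 h2).2.1
    simpa [Rfun, hf_def, hg_def] using this
  -- monotonicity of the ℓ¹ norm
  have hgmono : ∀ η1 η2 : ℝ, 0 ≤ η1 → η1 ≤ η2 → g η2 ≤ g η1 := by
    intro η1 η2 h1 h12
    rcases eq_or_lt_of_le h12 with rfl | hlt12
    · exact le_rfl
    · have hA1 := hA η1 η2 h1 (h1.trans h12)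
      have hA2 := hA η2 η1 (h1.trans h12) h1
      by_contra hcon
      push_neg at hcon
      nlinarith [mul_pos (sub_pos.2 hlt12) (sub_pos.2 hcon)]
  -- monotonicity of the ℓ² norm
  have hfmono : ∀ η1 η2 : ℝ, 0 ≤ η1 → η1 ≤ η2 → f η1 ≤ f η2 := by
    intro η1 η2 h1 h12
    have hA1 := hA η1 η2 h1 (h1.trans h12)
    have hg := hgmono η1 η2 h1 h12
    have hn1 : 0 ≤ f η1 := norm_nonneg _
    have hn2 : 0 ≤ f η2 := norm_nonneg _
    nlinarith [mul_le_mul_of_nonneg_left hg h1]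
  -- bounds on f
  have hf_le : ∀ η : ℝ, 0 ≤ η → f η ≤ Linf := by
    intro η hη
    refine ge_of_tendsto hLinf ?_
    filter_upwards [Filter.eventually_ge_atTop η] with t ht
    exact hfmono η t hη ht
  have hL0nonneg : 0 ≤ L0 := by
    refine ge_of_tendsto hL0 ?_
    filter_upwards with t using norm_nonneg _
  have hLinfpos : 0 < Linf := lt_of_le_of_lt hL0nonneg hlt
  -- strong convexity estimate
  have hmid : ∀ η1 η2 : ℝ, 0 ≤ η1 → 0 ≤ η2 →
      ‖xsol η1 - xsol η2‖^2 ≤ 2 * (η2 - η1) * (g η1 - g η2) := by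
    intro η1 η2 h1 h2
    set x1 := xsol η1
    set x2 := xsol η2
    set z : ltwo := (2⁻¹ : ℝ) • (x1 + x2) with hz_def
    have hx1L1 := (hxsol η1 h1).1
    have hx2L1 := (hxsol η2 h2).1
    have hzL1 : inL1 z := inL1_midpoint hx1L1 hx2L1
    have hKz : K z = ydag := by
      rw [hz_def, _root_.map_smul, map_add, (hxsol η1 h1).2.1, (hxsol η2 h2).2.1,
        ← two_smul ℝ ydag, smul_smul]
      norm_num
    have hl1z : l1norm z ≤ (g η1 + g η2) / 2 := l1norm_midpoint hx1L1 hx2L1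
    have hpar := parallelogram_law_with_norm ℝ x1 x2
    have hnz : ‖z‖ = 2⁻¹ * ‖x1 + x2‖ := by
      rw [hz_def, norm_smul]
      norm_num
    have hm1 := (hxsol η1 h1).2.2 z hzL1 hKz
    have hm2 := (hxsol η2 h2).2.2 z hzL1 hKz
    simp only [Rfun] at hm1 hm2
    have hq : 2 * ‖z‖ = ‖x1 + x2‖ := by rw [hnz]; ring
    show ‖x1 - x2‖^2 ≤ 2 * (η2 - η1) * (l1norm x1 - l1norm x2)
    exact parallelogram_arith η1 η2 (l1norm x1) (l1norm x2) (l1norm z) ‖x1‖ ‖x2‖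
      ‖x1 + x2‖ ‖x1 - x2‖ ‖z‖ h1 h2 (by linarith) (by linarith) hl1z hq (by simpa only [sq] using hpar)
  -- pick a and b
  set m : ℝ := (L0 + Linf) / 2 with hm_def
  have hmL0 : L0 < m := by rw [hm_def]; linarith
  have hmLinf : m < Linf := by rw [hm_def]; linarith
  obtain ⟨a, hfa, ha⟩ :=
    ((hL0.eventually_lt_const hmL0).and self_mem_nhdsWithin).exists
  obtain ⟨b, hfb, hab⟩ :=
    ((hLinf.eventually_const_lt hmLinf).and (Filter.eventually_gt_atTop a)).exists
  have ha' : (0:ℝ) ≤ a := ha.le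
  have hab' : a ≤ b := hab.le
  -- the Lipschitz constant
  set Cc : ℝ := 2 * Linf / a with hCc_def
  have hCcpos : 0 < Cc := by
    apply div_pos (by linarith) ha
  -- Lipschitz estimate on [a, ∞)
  have hLip : ∀ η1 η2 : ℝ, a ≤ η1 → η1 ≤ η2 → f η2 - f η1 ≤ Cc * (η2 - η1) := by
    intro η1 η2 hη1 h12
    have h1 : (0:ℝ) ≤ η1 := le_trans ha' hη1
    have h2 : (0:ℝ) ≤ η2 := le_trans h1 h12
    have hD := hmid η1 η2 h1 h2
    have habs : f η2 - f η1 ≤ ‖xsol η1 - xsol η2‖ := by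
      have := abs_norm_sub_norm_le (xsol η2) (xsol η1)
      rw [norm_sub_rev]
      calc f η2 - f η1 ≤ |‖xsol η2‖ - ‖xsol η1‖| := le_abs_self _
        _ ≤ ‖xsol η2 - xsol η1‖ := this
    have hgf := hA η1 η2 h1 h2
    have hfm := hfmono η1 η2 h1 h12
    have hf2 := hf_le η2 h2
    have hf1n : 0 ≤ f η1 := norm_nonneg _
    have hg := hgmono η1 η2 h1 h12
    have hkey : (f η2 - f η1) * a ≤ 2 * Linf * (η2 - η1) :=
      lip_arith η1 η2 ‖xsol η1 - xsol η2‖ (g η1) (g η2) (f η1) (f η2) Linf a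
        hD habs hgf hfm hf2 hf1n ha hη1 h12 hg
    calc f η2 - f η1 = ((f η2 - f η1) * a) / a := by field_simp
      _ ≤ (2 * Linf * (η2 - η1)) / a := (div_le_div_iff_of_pos_right ha).2 hkey
      _ = Cc * (η2 - η1) := by rw [hCc_def]; ring
  -- the clamp function and the clamped norm function
  set c : ℝ → ℝ := fun t => min b (max a t) with hc_def
  have hc_mem : ∀ t, a ≤ c t ∧ c t ≤ b := by
    intro t
    constructor
    · exact le_min hab' (le_max_left _ _)
    · exact min_le_left _ _
  have hc_mono : Monotone c := fun s t hst =>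
    min_le_min le_rfl (max_le_max le_rfl hst)
  have hc_lip : ∀ s t : ℝ, s ≤ t → c t - c s ≤ t - s := by
    intro s t hst
    simp only [hc_def, min_def, max_def]
    split_ifs <;> linarith
  set F : ℝ → ℝ := fun t => f (c t) with hF_def
  have hmonoF : Monotone F := by
    intro s t hst
    exact hfmono (c s) (c t) (le_trans ha' (hc_mem s).1) (hc_mono hst)
  have hFlip : ∀ s t : ℝ, s ≤ t → F t - F s ≤ Cc * (t - s) := by
    intro s t hst
    have h1 := hLip (c s) (c t) (hc_mem s).1 (hc_mono hst)
    have h2 := hc_lip s t hst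
    nlinarith [hc_mono hst, (hc_mem s).1]
  have hFlw : LipschitzWith (Real.toNNReal Cc) F := by
    apply LipschitzWith.of_dist_le_mul
    intro x y
    rw [Real.dist_eq, Real.dist_eq, Real.coe_toNNReal _ hCcpos.le]
    rcases le_total x y with h | h
    · rw [abs_of_nonpos (by linarith [hmonoF h] : F x - F y ≤ 0),
        abs_of_nonpos (by linarith : x - y ≤ 0)]
      have := hFlip x y h
      linarith
    · rw [abs_of_nonneg (by linarith [hmonoF h] : 0 ≤ F x - F y),
        abs_of_nonneg (by linarith : 0 ≤ x - y)]
      have := hFlip y x h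
      linarith
  have hFcont : Continuous F := hFlw.continuous
  -- Stieltjes functions
  set SF : StieltjesFunction ℝ :=
    ⟨F, hmonoF, fun x => hFcont.continuousWithinAt⟩ with hSF_def
  set SG : StieltjesFunction ℝ :=
    ⟨fun x => Cc * x - F x,
      fun s t hst => by
        have := hFlip s t hst
        simp only
        nlinarith,
      fun x => ((continuous_const.mul continuous_id).sub hFcont).continuousWithinAt⟩
    with hSG_def
  set SCid : StieltjesFunction ℝ :=
    ⟨fun x => Cc * x,
      fun s t hst => by simp only; nlinarith,
      fun x => (continuous_const.mul continuous_id).continuousWithinAt⟩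
    with hSCid_def
  have hsum_fun : SF + SG = SCid := by
    apply StieltjesFunction.ext
    intro x
    show F x + (Cc * x - F x) = Cc * x
    ring
  have hSCid_meas : SCid.measure = (ENNReal.ofReal Cc) • (MeasureTheory.volume) := by
    refine MeasureTheory.Measure.ext_of_Ioc _ _ ?_
    intro u v huv
    rw [StieltjesFunction.measure_Ioc, MeasureTheory.Measure.smul_apply,
      Real.volume_Ioc, smul_eq_mul, ← ENNReal.ofReal_mul hCcpos.le]
    show ENNReal.ofReal (Cc * v - Cc * u) = _
    congr 1
    ring
  have hle : SF.measure ≤ SCid.measure := by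
    rw [← hsum_fun, StieltjesFunction.measure_add]
    exact MeasureTheory.Measure.le_add_right le_rfl
  have hac : SF.measure ≪ MeasureTheory.volume := by
    apply MeasureTheory.Measure.absolutelyContinuous_of_le_smul (c := ENNReal.ofReal Cc)
    rw [← hSCid_meas]
    exact hle
  -- finiteness of SF.measure
  have hFbot : Tendsto SF atBot (nhds (f a)) := by
    apply Tendsto.congr' _ tendsto_const_nhds
    filter_upwards [Filter.eventually_le_atBot a] with t ht
    show f a = F t
    have : c t = a := by
      rw [hc_def]
      simp only
      rw [max_eq_left ht, min_eq_right hab']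
    rw [hF_def]
    simp only
    rw [this]
  have hFtop : Tendsto SF atTop (nhds (f b)) := by
    apply Tendsto.congr' _ tendsto_const_nhds
    filter_upwards [Filter.eventually_ge_atTop b] with t ht
    show f b = F t
    have : c t = b := by
      rw [hc_def]
      simp only
      rw [max_eq_right (hab'.trans ht), min_eq_left ht]
    rw [hF_def]
    simp only
    rw [this]
  haveI hfin : MeasureTheory.IsFiniteMeasure SF.measure :=
    SF.isFiniteMeasure hFbot hFtop
  -- the set C
  set C : Set ℝ :=
    {η | η ∈ Set.Ioo a b ∧ ∃ d : ℝ, 0 < d ∧ HasDerivAt (fun t : ℝ => ‖xsol t‖) d η}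
    with hC_def
  refine ⟨C, ?_, ?_, ?_⟩
  · intro η hη
    exact lt_trans ha hη.1.1
  · -- positivity of the measure of C
    by_contra hpos
    have hC0 : MeasureTheory.volume C = 0 :=
      le_antisymm (not_lt.1 hpos) zero_le
    have hnC : ∀ᵐ x ∂(MeasureTheory.volume), x ∉ C :=
      MeasureTheory.measure_eq_zero_iff_ae_notMem.1 hC0
    have hSFeq : hmonoF.stieltjesFunction = SF := by
      apply StieltjesFunction.ext
      intro x
      rw [Monotone.stieltjesFunction_eq]
      exact rightLim_eq_of_tendsto
        (hFcont.continuousAt.continuousWithinAt)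
    have hder : ∀ᵐ x ∂(MeasureTheory.volume), HasDerivAt F
        ((MeasureTheory.Measure.rnDeriv SF.measure MeasureTheory.volume x).toReal) x := by
      have := hmonoF.ae_hasDerivAt
      rw [hSFeq] at this
      exact this
    have hlt_top := MeasureTheory.Measure.rnDeriv_lt_top SF.measure MeasureTheory.volume
    have hzero : ∀ᵐ x ∂(MeasureTheory.volume), x ∈ Set.Ioo a b →
        MeasureTheory.Measure.rnDeriv SF.measure MeasureTheory.volume x = 0 := by
      filter_upwards [hder, hlt_top, hnC] with x h1 h2 h3 hx
      by_contra hne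
      apply h3
      have htR : 0 < (MeasureTheory.Measure.rnDeriv SF.measure MeasureTheory.volume x).toReal :=
        ENNReal.toReal_pos hne h2.ne
      refine ⟨hx, _, htR, ?_⟩
      apply h1.congr_of_eventuallyEq
      filter_upwards [isOpen_Ioo.mem_nhds hx] with t ht
      show ‖xsol t‖ = F t
      have : c t = t := by
        rw [hc_def]
        simp only
        rw [max_eq_right ht.1.le, min_eq_right ht.2.le]
      rw [hF_def]
      simp only
      rw [this]
    have hioo : SF.measure (Set.Ioo a b) = 0 := by
      rw [← MeasureTheory.Measure.withDensity_rnDeriv_eq SF.measure MeasureTheory.volume hac,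
        MeasureTheory.withDensity_apply _ measurableSet_Ioo]
      have hae : ∀ᵐ x ∂(MeasureTheory.volume.restrict (Set.Ioo a b)),
          MeasureTheory.Measure.rnDeriv SF.measure MeasureTheory.volume x = 0 :=
        (MeasureTheory.ae_restrict_iff' measurableSet_Ioo).2 hzero
      rw [MeasureTheory.lintegral_congr_ae hae]
      simp
    have hleft : Function.leftLim F b = F b :=
      leftLim_eq_of_tendsto
        (hFcont.continuousAt.continuousWithinAt)
    have hFa : F a = f a := by
      rw [hF_def]
      simp only
      have : c a = a := by
        rw [hc_def]; simp only
        rw [max_self, min_eq_right hab']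
      rw [this]
    have hFb : F b = f b := by
      rw [hF_def]
      simp only
      have : c b = b := by
        rw [hc_def]; simp only
        rw [max_eq_right hab', min_self]
      rw [this]
    have hioo' : SF.measure (Set.Ioo a b) = ENNReal.ofReal (F b - F a) := by
      rw [StieltjesFunction.measure_Ioo]
      show ENNReal.ofReal (Function.leftLim F b - F a) = _
      rw [hleft]
    rw [hioo'] at hioo
    have : (0:ℝ) < F b - F a := by
      rw [hFa, hFb]
      linarith
    exact (ENNReal.ofReal_pos.2 this).ne' hioo
  · intro η hη
    exact hη.2
end
end

section
/- Fix η > 0. For each δ > 0 let y^δ satisfy ‖y^δ − y†‖ ≤ δ, and let β = β(δ) > 0 be chosen by the discrepancy principle, i.e., ‖Kx_{ηβ,β}^δ − y^δ‖ = δ. Then as δ → 0 the minimizers x_{ηβ,β}^δ converge strongly in ℓ² to the R_η-minimizing solution x† of Kx = y†. -/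
noncomputable section

open Filter Topology

/-- The elastic-net functional `Φ_{α,β}(x) = ½‖Kx − y‖² + α‖x‖₁ + (β/2)‖x‖₂²`,
real-valued on its effective domain `ℓ¹ ∩ ℓ²` (the convention `Φ = +∞` off `ℓ¹` is
implemented by restricting all statements to `inL1`). -/
noncomputable def Phi {H : Type*} [NormedAddCommGroup H] [InnerProductSpace ℝ H]
    (K : ltwo →L[ℝ] H) (y : H) (α β : ℝ) (x : ltwo) : ℝ :=
  (1 / 2) * ‖K x - y‖ ^ 2 + α * l1norm x + (β / 2) * ‖x‖ ^ 2

/-- `x` is a minimizer of `Φ_{α,β}` over `ℓ²` (with the `+∞` convention off `ℓ¹`). -/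
def IsMinimizer {H : Type*} [NormedAddCommGroup H] [InnerProductSpace ℝ H]
    (K : ltwo →L[ℝ] H) (y : H) (α β : ℝ) (x : ltwo) : Prop :=
  inL1 x ∧ ∀ z : ltwo, inL1 z → Phi K y α β x ≤ Phi K y α β z


/-! ### Auxiliary lemmas -/

open scoped ENNReal RealInnerProductSpace

set_option maxHeartbeats 1000000

lemma EN_l1norm_nonneg (x : ltwo) : 0 ≤ l1norm x := tsum_nonneg (fun _ => abs_nonneg _)

lemma EN_summable_abs {x : ltwo} (h : inL1 x) : Summable fun i => |x i| := by
  have := (memℓp_gen_iff (p := 1) (by norm_num) (f := fun i => x i)).1 h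
  simpa using this

lemma EN_sum_abs_le {x : ltwo} (h : inL1 x) (s : Finset ℕ) :
    ∑ i ∈ s, |x i| ≤ l1norm x :=
  Summable.sum_le_tsum s (fun i _ => abs_nonneg _) (EN_summable_abs h)

lemma EN_summable_sq (x : ltwo) : Summable fun i => (x i) ^ 2 := by
  have h := x.2
  have := (memℓp_gen_iff (p := 2) (by norm_num) (f := fun i => x i)).1 h
  refine this.congr fun i => ?_
  norm_num

lemma EN_norm_sq_eq (x : ltwo) : ‖x‖ ^ 2 = ∑' i, (x i) ^ 2 := by
  have := lp.norm_rpow_eq_tsum (p := 2) (by norm_num) x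
  norm_num at this
  exact this

lemma EN_sum_sq_le (x : ltwo) (s : Finset ℕ) : ∑ i ∈ s, (x i) ^ 2 ≤ ‖x‖ ^ 2 := by
  rw [EN_norm_sq_eq]
  exact Summable.sum_le_tsum s (fun i _ => sq_nonneg _) (EN_summable_sq x)

lemma EN_coord_le (x : ltwo) (i : ℕ) : |x i| ≤ ‖x‖ :=
  lp.norm_apply_le_norm (by norm_num) x i

lemma EN_inL1_add {x y : ltwo} (hx : inL1 x) (hy : inL1 y) : inL1 (x + y) := by
  unfold inL1
  have h : (fun i => ((x + y) : ltwo) i) = fun i => x i + y i := by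
    funext i; simp [lp.coeFn_add]
  rw [h]
  exact hx.add hy

lemma EN_inL1_smul (c : ℝ) {x : ltwo} (hx : inL1 x) : inL1 (c • x) := by
  unfold inL1
  have h : (fun i => ((c • x) : ltwo) i) = fun i => c • (x i) := by
    funext i; simp [lp.coeFn_smul]
  rw [h]
  exact hx.const_smul c

lemma EN_l1norm_smul_add (c : ℝ) (x y : ltwo) (hx : inL1 x) (hy : inL1 y) :
    l1norm (c • (x + y)) ≤ |c| * (l1norm x + l1norm y) := by
  unfold l1norm
  have hsum : Summable fun i => |c| * (|x i| + |y i|) :=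
    (((EN_summable_abs hx).add (EN_summable_abs hy)).mul_left _)
  calc ∑' i, |((c • (x + y)) : ltwo) i|
      ≤ ∑' i, |c| * (|x i| + |y i|) := by
        refine Summable.tsum_le_tsum (fun i => ?_) ?_ hsum
        · have : ((c • (x + y)) : ltwo) i = c * (x i + y i) := by
            simp [lp.coeFn_smul, lp.coeFn_add, mul_add]; rfl
          rw [this, abs_mul]
          exact mul_le_mul_of_nonneg_left (abs_add_le _ _) (abs_nonneg c)
        · exact EN_summable_abs (EN_inL1_smul c (EN_inL1_add hx hy))
    _ = |c| * (∑' i, |x i| + ∑' i, |y i|) := by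
        rw [tsum_mul_left, Summable.tsum_add (EN_summable_abs hx) (EN_summable_abs hy)]

/-- Uniqueness of the `R_η`-minimizing solution. -/
lemma EN_unique {H : Type*} [NormedAddCommGroup H] [InnerProductSpace ℝ H]
    (K : ltwo →L[ℝ] H) (ydag : H) (η : ℝ) (hη : 0 < η)
    (xdag : ltwo) (hxdag : IsRMinSolution K ydag η xdag)
    (z : ltwo) (hz1 : inL1 z) (hzK : K z = ydag)
    (hzR : Rfun η z ≤ Rfun η xdag) : z = xdag := by
  obtain ⟨hd1, hdK, hdmin⟩ := hxdag
  set m : ltwo := (2⁻¹ : ℝ) • (z + xdag) with hm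
  have hm1 : inL1 m := EN_inL1_smul _ (EN_inL1_add hz1 hd1)
  have hmK : K m = ydag := by
    rw [hm, map_smul, map_add, hzK, hdK, smul_add, ← add_smul]
    norm_num
  have hl1 : l1norm m ≤ 2⁻¹ * (l1norm z + l1norm xdag) := by
    have h := EN_l1norm_smul_add 2⁻¹ z xdag hz1 hd1
    rw [show |(2⁻¹:ℝ)| = 2⁻¹ by norm_num] at h
    exact h
  have hnm : ‖m‖ ^ 2 = 2⁻¹ * (‖z‖ ^ 2 + ‖xdag‖ ^ 2) - 4⁻¹ * ‖z - xdag‖ ^ 2 := by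
    have hpar := parallelogram_law_with_norm ℝ z xdag
    have : ‖m‖ = 2⁻¹ * ‖z + xdag‖ := by
      rw [hm, norm_smul]; norm_num
    rw [this]; nlinarith [hpar]
  have hRm : Rfun η m ≤ Rfun η xdag - 8⁻¹ * ‖z - xdag‖ ^ 2 := by
    have h1 : η * l1norm m ≤ η * (2⁻¹ * (l1norm z + l1norm xdag)) :=
      mul_le_mul_of_nonneg_left hl1 hη.le
    simp only [Rfun] at hzR ⊢
    nlinarith [hnm]
  have hmin := hdmin m hm1 hmK
  have hz0 : ‖z - xdag‖ ^ 2 ≤ 0 := by nlinarith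
  have hz1' : ‖z - xdag‖ = 0 := by nlinarith [norm_nonneg (z - xdag)]
  exact sub_eq_zero.mp (norm_eq_zero.mp hz1')

lemma EN_inner_single (a : ltwo) (i : ℕ) (c : ℝ) :
    ⟪a, lp.single 2 i c⟫ = a i * c := by
  rw [lp.inner_single_right]
  simp [RCLike.inner_apply, mul_comm]

/-- Bounded + pointwise convergent implies weakly convergent in `ℓ²`. -/
lemma EN_weak (an : ℕ → ltwo) (xb : ltwo) (M : ℝ)
    (hM : ∀ n, ‖an n‖ ≤ M) (hxbM : ‖xb‖ ≤ M)
    (hpt : ∀ i, Tendsto (fun n => an n i) atTop (𝓝 (xb i)))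
    (z : ltwo) : Tendsto (fun n => ⟪an n, z⟫) atTop (𝓝 ⟪xb, z⟫) := by
  have hM0 : 0 ≤ M := (norm_nonneg _).trans (hM 0)
  rw [Metric.tendsto_atTop]
  intro ε hε
  set ε₁ : ℝ := ε / (4 * (M + 1)) with hε₁def
  have hε₁ : 0 < ε₁ := by positivity
  have hsum := lp.hasSum_single (p := (2 : ℝ≥0∞)) (by norm_num) z
  obtain ⟨n₀, hn₀⟩ : ∃ n₀, ‖(∑ i ∈ Finset.range n₀, lp.single 2 i (z i)) - z‖ < ε₁ := by
    have ht := hsum.tendsto_sum_nat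
    rw [tendsto_iff_norm_sub_tendsto_zero] at ht
    obtain ⟨N₀, hN₀⟩ := Metric.tendsto_atTop.1 ht ε₁ hε₁
    refine ⟨N₀, ?_⟩
    have := hN₀ N₀ le_rfl
    rwa [Real.dist_eq, sub_zero, abs_of_nonneg (norm_nonneg _)] at this
  set d : ltwo := ∑ i ∈ Finset.range n₀, lp.single 2 i (z i) with hd
  have hinner_d : ∀ a : ltwo, ⟪a, d⟫ = ∑ i ∈ Finset.range n₀, a i * z i := by
    intro a
    rw [hd, inner_sum]
    exact Finset.sum_congr rfl fun i _ => EN_inner_single a i (z i)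
  have hmid : Tendsto (fun n => ⟪an n, d⟫) atTop (𝓝 ⟪xb, d⟫) := by
    simp only [hinner_d]
    exact tendsto_finset_sum _ fun i _ => (hpt i).mul tendsto_const_nhds
  obtain ⟨N, hN⟩ := Metric.tendsto_atTop.1 hmid (ε / 2) (by positivity)
  refine ⟨N, fun n hn => ?_⟩
  have h1 : |⟪an n, z - d⟫| ≤ M * ε₁ := by
    calc |⟪an n, z - d⟫| ≤ ‖an n‖ * ‖z - d‖ := abs_real_inner_le_norm _ _
      _ ≤ M * ε₁ := by
          apply mul_le_mul (hM n) ?_ (norm_nonneg _) hM0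
          rw [← norm_neg]; simpa [neg_sub] using hn₀.le
  have h2 : |⟪xb, z - d⟫| ≤ M * ε₁ := by
    calc |⟪xb, z - d⟫| ≤ ‖xb‖ * ‖z - d‖ := abs_real_inner_le_norm _ _
      _ ≤ M * ε₁ := by
          apply mul_le_mul hxbM ?_ (norm_nonneg _) hM0
          rw [← norm_neg]; simpa [neg_sub] using hn₀.le
  have h3 := hN n hn
  rw [Real.dist_eq] at h3 ⊢
  have e1 : ⟪an n, z⟫ = ⟪an n, d⟫ + ⟪an n, z - d⟫ := by
    rw [← inner_add_right, show d + (z - d) = z from by abel]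
  have e2 : ⟪xb, z⟫ = ⟪xb, d⟫ + ⟪xb, z - d⟫ := by
    rw [← inner_add_right, show d + (z - d) = z from by abel]
  have hMε : M * ε₁ ≤ ε / 4 := by
    rw [hε₁def, ← mul_div_assoc,
      div_le_div_iff₀ (by positivity) (by norm_num : (0:ℝ) < 4)]
    nlinarith [hε.le]
  have key : ⟪an n, z⟫ - ⟪xb, z⟫ =
      (⟪an n, d⟫ - ⟪xb, d⟫) + ⟪an n, z - d⟫ + -(⟪xb, z - d⟫) := by
    rw [e1, e2]; ring
  rw [key]
  have hb1 := abs_add_le ((⟪an n, d⟫ - ⟪xb, d⟫) + ⟪an n, z - d⟫) (-(⟪xb, z - d⟫))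
  have hb2 := abs_add_le (⟪an n, d⟫ - ⟪xb, d⟫) (⟪an n, z - d⟫)
  rw [abs_neg] at hb1
  linarith

/-- The sequential core: any sequence with `R`-values dominated by `R(x†)` whose images
converge to `y†` has a subsequence converging strongly to `x†`. -/
lemma EN_core {H : Type*} [NormedAddCommGroup H] [InnerProductSpace ℝ H]
    (K : ltwo →L[ℝ] H) (ydag : H) (η : ℝ) (hη : 0 < η)
    (xdag : ltwo) (hxdag : IsRMinSolution K ydag η xdag)
    (xn : ℕ → ltwo) (h1 : ∀ n, inL1 (xn n))
    (hR : ∀ n, Rfun η (xn n) ≤ Rfun η xdag)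
    (hK : Tendsto (fun n => ‖K (xn n) - ydag‖) atTop (𝓝 0)) :
    ∃ φ : ℕ → ℕ, StrictMono φ ∧ Tendsto (fun k => xn (φ k)) atTop (𝓝 xdag) := by
  obtain ⟨hd1, hdK, hdmin⟩ := hxdag
  set C : ℝ := Rfun η xdag with hCdef
  have hRn : ∀ n, η * l1norm (xn n) + (1/2) * ‖xn n‖^2 ≤ C := fun n => hR n
  have hC0 : 0 ≤ C := by
    have := hRn 0
    nlinarith [EN_l1norm_nonneg (xn 0), sq_nonneg ‖xn 0‖, mul_nonneg hη.le (EN_l1norm_nonneg (xn 0))]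
  set M : ℝ := Real.sqrt (2 * C) with hMdef
  have hM0 : 0 ≤ M := Real.sqrt_nonneg _
  have hMsq : M ^ 2 = 2 * C := Real.sq_sqrt (by linarith)
  have hMn : ∀ n, ‖xn n‖ ≤ M := by
    intro n
    have h2 : ‖xn n‖ ^ 2 ≤ 2 * C := by
      have := hRn n
      nlinarith [mul_nonneg hη.le (EN_l1norm_nonneg (xn n))]
    nlinarith [norm_nonneg (xn n)]
  have hl1n : ∀ n, l1norm (xn n) ≤ C / η := by
    intro n
    rw [le_div_iff₀ hη]
    have := hRn n
    nlinarith [sq_nonneg ‖xn n‖]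
  -- sequential compactness of the Hilbert cube
  set S : Set (ℕ → ℝ) := Set.pi Set.univ (fun _ : ℕ => Set.Icc (-M) M) with hSdef
  have hScomp : IsCompact S := isCompact_univ_pi (fun _ => isCompact_Icc)
  have hSseq : IsSeqCompact S := hScomp.isSeqCompact
  have hgS : ∀ n, (fun i => xn n i) ∈ S := by
    intro n i _
    have := (EN_coord_le (xn n) i).trans (hMn n)
    exact abs_le.mp this
  obtain ⟨f, hfS, φ, hφmono, hφt⟩ := hSseq hgS
  have hpt : ∀ i, Tendsto (fun k => xn (φ k) i) atTop (𝓝 (f i)) := by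
    intro i
    exact (tendsto_pi_nhds.1 hφt) i
  -- the candidate limit
  have hsumbound : ∀ s : Finset ℕ, ∑ i ∈ s, (f i) ^ 2 ≤ 2 * C := by
    intro s
    have hlim : Tendsto (fun k => ∑ i ∈ s, (xn (φ k) i) ^ 2) atTop
        (𝓝 (∑ i ∈ s, (f i) ^ 2)) :=
      tendsto_finset_sum _ fun i _ => (hpt i).pow 2
    refine le_of_tendsto hlim (Filter.Eventually.of_forall fun k => ?_)
    calc ∑ i ∈ s, (xn (φ k) i) ^ 2 ≤ ‖xn (φ k)‖ ^ 2 := EN_sum_sq_le _ s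
      _ ≤ M ^ 2 := by nlinarith [hMn (φ k), norm_nonneg (xn (φ k))]
      _ = 2 * C := hMsq
  have habsbound : ∀ s : Finset ℕ, ∑ i ∈ s, |f i| ≤ C / η := by
    intro s
    have hlim : Tendsto (fun k => ∑ i ∈ s, |xn (φ k) i|) atTop
        (𝓝 (∑ i ∈ s, |f i|)) :=
      tendsto_finset_sum _ fun i _ => (hpt i).abs
    refine le_of_tendsto hlim (Filter.Eventually.of_forall fun k => ?_)
    exact (EN_sum_abs_le (h1 (φ k)) s).trans (hl1n (φ k))
  have hf2 : Memℓp f 2 := by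
    refine memℓp_gen' (C := 2 * C) ?_
    intro s
    have : ∀ i, ‖f i‖ ^ (2 : ℝ≥0∞).toReal = (f i) ^ 2 := by intro i; norm_num
    rw [Finset.sum_congr rfl fun i _ => this i]
    exact hsumbound s
  set xb : ltwo := ⟨f, hf2⟩ with hxbdef
  have hxbco : ∀ i, xb i = f i := fun i => rfl
  have hxbM : ‖xb‖ ≤ M := by
    have h2 : ‖xb‖ ^ 2 ≤ 2 * C := by
      rw [EN_norm_sq_eq]
      exact Summable.tsum_le_of_sum_le (EN_summable_sq xb) hsumbound
    nlinarith [norm_nonneg xb]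
  have hxb1 : inL1 xb := by
    refine memℓp_gen' (C := C / η) ?_
    intro s
    have : ∀ i, ‖xb i‖ ^ (1 : ℝ≥0∞).toReal = |f i| := by intro i; rw [hxbco]; norm_num
    rw [Finset.sum_congr rfl fun i _ => this i]
    exact habsbound s
  have hweak := EN_weak (fun k => xn (φ k)) xb M (fun k => hMn (φ k)) hxbM hpt
  -- K xb = ydag
  have hKlim : Tendsto (fun k => K (xn (φ k))) atTop (𝓝 ydag) := by
    rw [tendsto_iff_norm_sub_tendsto_zero]
    exact hK.comp (hφmono.tendsto_atTop)
  have hKxb : K xb = ydag := by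
    set v : H := K xb - ydag with hv
    set w : ltwo := (InnerProductSpace.toDual ℝ ltwo).symm
      (((innerSL ℝ v).comp K : ltwo →L[ℝ] ℝ) : StrongDual ℝ ltwo) with hw
    have hwspec : ∀ u : ltwo, ⟪w, u⟫ = ⟪v, K u⟫ := by
      intro u
      rw [hw, InnerProductSpace.toDual_symm_apply]
      rfl
    have hlim1 : Tendsto (fun k => ⟪v, K (xn (φ k))⟫) atTop (𝓝 ⟪v, ydag⟫) :=
      tendsto_const_nhds.inner hKlim
    have hlim2 : Tendsto (fun k => ⟪v, K (xn (φ k))⟫) atTop (𝓝 ⟪v, K xb⟫) := by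
      have : ∀ k, ⟪v, K (xn (φ k))⟫ = ⟪(xn (φ k)), w⟫ := by
        intro k; rw [← hwspec, real_inner_comm]
      simp only [this]
      have h' := hweak w
      have hxw : (⟪xb, w⟫ : ℝ) = ⟪v, K xb⟫ := by rw [real_inner_comm]; exact hwspec xb
      rw [← hxw]
      exact h'
    have heq : ⟪v, K xb⟫ = ⟪v, ydag⟫ := tendsto_nhds_unique hlim2 hlim1
    have hvv : ⟪v, v⟫ = (0:ℝ) := by
      have hsub : (⟪v, K xb - ydag⟫ : ℝ) = ⟪v, K xb⟫ - ⟪v, ydag⟫ := inner_sub_right _ _ _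
      rw [show (K xb - ydag : H) = v from rfl] at hsub
      rw [hsub, heq, sub_self]
    have hv0 : v = 0 := inner_self_eq_zero.mp hvv
    rw [hv] at hv0
    exact sub_eq_zero.mp hv0
  -- R(xb) ≤ C
  have hRxb : Rfun η xb ≤ C := by
    have hsummable : Summable (fun i => η * |xb i| + (1/2) * (xb i) ^ 2) :=
      ((EN_summable_abs hxb1).mul_left η).add ((EN_summable_sq xb).mul_left (1/2))
    have hcomb : ∀ s : Finset ℕ, ∑ i ∈ s, (η * |xb i| + (1/2) * (xb i) ^ 2) ≤ C := by
      intro s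
      have hlim : Tendsto (fun k => η * (∑ i ∈ s, |xn (φ k) i|)
          + (1/2) * (∑ i ∈ s, (xn (φ k) i) ^ 2)) atTop
          (𝓝 (η * (∑ i ∈ s, |f i|) + (1/2) * (∑ i ∈ s, (f i) ^ 2))) := by
        exact ((tendsto_finset_sum _ fun i _ => (hpt i).abs).const_mul η).add
          ((tendsto_finset_sum _ fun i _ => (hpt i).pow 2).const_mul (1/2))
      have hle : ∀ k, η * (∑ i ∈ s, |xn (φ k) i|)
          + (1/2) * (∑ i ∈ s, (xn (φ k) i) ^ 2) ≤ C := by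
        intro k
        have ha := EN_sum_abs_le (h1 (φ k)) s
        have hb := EN_sum_sq_le (xn (φ k)) s
        have := hRn (φ k)
        nlinarith
      have := le_of_tendsto hlim (Filter.Eventually.of_forall hle)
      calc ∑ i ∈ s, (η * |xb i| + (1/2) * (xb i) ^ 2)
          = η * (∑ i ∈ s, |f i|) + (1/2) * (∑ i ∈ s, (f i) ^ 2) := by
            rw [Finset.sum_add_distrib, ← Finset.mul_sum, ← Finset.mul_sum]
        _ ≤ C := this
    have htsum : Rfun η xb = ∑' i, (η * |xb i| + (1/2) * (xb i) ^ 2) := by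
      rw [Rfun, l1norm, EN_norm_sq_eq,
        Summable.tsum_add ((EN_summable_abs hxb1).mul_left η) ((EN_summable_sq xb).mul_left (1/2)),
        tsum_mul_left, tsum_mul_left]
    rw [htsum]
    exact Summable.tsum_le_of_sum_le hsummable hcomb
  -- conclude xb = xdag
  have hxbd : xb = xdag :=
    EN_unique K ydag η hη xdag ⟨hd1, hdK, hdmin⟩ xb hxb1 hKxb hRxb
  have hfd : ∀ i, f i = xdag i := by
    intro i
    rw [← hxbco i, hxbd]
  -- strong convergence
  refine ⟨φ, hφmono, ?_⟩
  have hinner : Tendsto (fun k => ⟪xn (φ k), xdag⟫) atTop (𝓝 (‖xdag‖ ^ 2)) := by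
    have := hweak xdag
    rwa [hxbd, real_inner_self_eq_norm_sq] at this
  have hCeq : 2 * C = 2 * η * l1norm xdag + ‖xdag‖ ^ 2 := by
    rw [hCdef, Rfun]; ring
  rw [Metric.tendsto_atTop]
  intro ε hε
  set ε' : ℝ := ε ^ 2 / (2 * η + 3) with hε'def
  have hε' : 0 < ε' := by positivity
  -- eventual lower bound on l1norm
  have hl1low : ∀ᶠ k in atTop, l1norm xdag - ε' ≤ l1norm (xn (φ k)) := by
    have hhs : HasSum (fun i => |xdag i|) (l1norm xdag) := (EN_summable_abs hd1).hasSum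
    have ht := hhs.tendsto_sum_nat
    obtain ⟨n₁, hn₁⟩ := Metric.tendsto_atTop.1 ht (ε' / 2) (by positivity)
    have hgap : l1norm xdag - ε' / 2 ≤ ∑ i ∈ Finset.range n₁, |xdag i| := by
      have := hn₁ n₁ le_rfl
      rw [Real.dist_eq] at this
      have := abs_lt.1 this
      linarith [this.1]
    have hlim : Tendsto (fun k => ∑ i ∈ Finset.range n₁, |xn (φ k) i|) atTop
        (𝓝 (∑ i ∈ Finset.range n₁, |xdag i|)) := by
      refine tendsto_finset_sum _ fun i _ => ?_
      have := (hpt i).abs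
      rwa [hfd i] at this
    have hev : ∀ᶠ k in atTop,
        ∑ i ∈ Finset.range n₁, |xdag i| - ε' / 2 < ∑ i ∈ Finset.range n₁, |xn (φ k) i| := by
      have := hlim.eventually (eventually_gt_nhds
        (show (∑ i ∈ Finset.range n₁, |xdag i|) - ε' / 2 < ∑ i ∈ Finset.range n₁, |xdag i| by
          linarith))
      exact this
    refine hev.mono fun k hk => ?_
    have := EN_sum_abs_le (h1 (φ k)) (Finset.range n₁)
    linarith
  -- eventual lower bound on inner product
  have hinlow : ∀ᶠ k in atTop, ‖xdag‖ ^ 2 - ε' ≤ ⟪xn (φ k), xdag⟫ := by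
    have := hinner.eventually (eventually_gt_nhds
      (show ‖xdag‖ ^ 2 - ε' < ‖xdag‖ ^ 2 by linarith))
    exact this.mono fun k hk => hk.le
  have hboth := hl1low.and hinlow
  obtain ⟨N, hN⟩ := eventually_atTop.1 hboth
  refine ⟨N, fun k hk => ?_⟩
  obtain ⟨hkl1, hkin⟩ := hN k hk
  rw [dist_eq_norm]
  have hnormsq : ‖xn (φ k) - xdag‖ ^ 2 =
      ‖xn (φ k)‖ ^ 2 - 2 * ⟪xn (φ k), xdag⟫ + ‖xdag‖ ^ 2 := norm_sub_sq_real _ _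
  have hxknorm : ‖xn (φ k)‖ ^ 2 ≤ 2 * C - 2 * η * l1norm (xn (φ k)) := by
    have := hRn (φ k)
    linarith
  have hfinal : ‖xn (φ k) - xdag‖ ^ 2 ≤ (2 * η + 2) * ε' := by
    rw [hnormsq]
    have h5 : 2 * η * (l1norm xdag - ε') ≤ 2 * η * l1norm (xn (φ k)) :=
      mul_le_mul_of_nonneg_left hkl1 (by linarith)
    nlinarith [hxknorm, hkin, hCeq]
  have h3pos : (0:ℝ) < 2 * η + 3 := by linarith
  have hfrac : (2 * η + 2) / (2 * η + 3) < 1 := (div_lt_one h3pos).2 (by linarith)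
  have hε2 : (2 * η + 2) * ε' < ε ^ 2 := by
    have heq' : (2 * η + 2) * ε' = ((2 * η + 2) / (2 * η + 3)) * ε ^ 2 := by
      rw [hε'def]; ring
    rw [heq']
    calc ((2 * η + 2) / (2 * η + 3)) * ε ^ 2 < 1 * ε ^ 2 :=
          mul_lt_mul_of_pos_right hfrac (by positivity)
      _ = ε ^ 2 := one_mul _
  nlinarith [norm_nonneg (xn (φ k) - xdag), hfinal, hε2, hε]

/-- Consistency of the discrepancy principle: if for every `δ > 0` the parameter
`β(δ) > 0` is chosen such that `‖Kx_{ηβ,β}^δ − y^δ‖ = δ` and `‖y^δ − y†‖ ≤ δ`, then the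
minimizers converge strongly in `ℓ²` to the `R_η`-minimizing solution `x†` as `δ → 0⁺`. -/
theorem elasticNet_discrepancy_principle_consistency
    {H : Type*} [NormedAddCommGroup H] [InnerProductSpace ℝ H]
    (K : ltwo →L[ℝ] H) (ydag : H) (η : ℝ) (hη : 0 < η)
    (β : ℝ → ℝ) (hβpos : ∀ δ : ℝ, 0 < δ → 0 < β δ)
    (ydelta : ℝ → H) (hnoise : ∀ δ : ℝ, 0 < δ → ‖ydelta δ - ydag‖ ≤ δ)
    (xδ : ℝ → ltwo)
    (hxδ : ∀ δ : ℝ, 0 < δ → IsMinimizer K (ydelta δ) (η * β δ) (β δ) (xδ δ))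
    (hdiscr : ∀ δ : ℝ, 0 < δ → ‖K (xδ δ) - ydelta δ‖ = δ)
    (xdag : ltwo) (hxdag : IsRMinSolution K ydag η xdag) :
    Tendsto xδ (nhdsWithin 0 (Set.Ioi 0)) (nhds xdag) := by
  obtain ⟨hd1, hdK, hdmin⟩ := hxdag
  -- the key energy bound from the discrepancy principle
  have hRbound : ∀ δ : ℝ, 0 < δ → Rfun η (xδ δ) ≤ Rfun η xdag := by
    intro δ hδ
    obtain ⟨hx1, hxmin⟩ := hxδ δ hδ
    have h := hxmin xdag hd1
    rw [Phi, Phi, hdiscr δ hδ, hdK] at h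
    have hn : ‖ydag - ydelta δ‖ ≤ δ := by
      rw [← norm_neg]; simpa [neg_sub] using hnoise δ hδ
    have hβ := hβpos δ hδ
    have hδsq : ‖ydag - ydelta δ‖ ^ 2 ≤ δ ^ 2 := by
      nlinarith [norm_nonneg (ydag - ydelta δ)]
    rw [Rfun, Rfun]
    nlinarith [h, hδsq]
  have hKbound : ∀ δ : ℝ, 0 < δ → ‖K (xδ δ) - ydag‖ ≤ 2 * δ := by
    intro δ hδ
    calc ‖K (xδ δ) - ydag‖ = ‖(K (xδ δ) - ydelta δ) + (ydelta δ - ydag)‖ := by abel_nf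
      _ ≤ ‖K (xδ δ) - ydelta δ‖ + ‖ydelta δ - ydag‖ := norm_add_le _ _
      _ ≤ δ + δ := by rw [hdiscr δ hδ]; exact add_le_add le_rfl (hnoise δ hδ)
      _ = 2 * δ := by ring
  have hinL1 : ∀ δ : ℝ, 0 < δ → inL1 (xδ δ) := fun δ hδ => (hxδ δ hδ).1
  -- reduce to sequences
  apply tendsto_of_subseq_tendsto
  intro ns hns
  have hpos : ∀ᶠ n in atTop, ns n ∈ Set.Ioi (0:ℝ) :=
    hns.eventually (eventually_mem_nhdsWithin)
  obtain ⟨N₀, hN₀⟩ := eventually_atTop.1 hpos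
  set u : ℕ → ℝ := fun n => ns (n + N₀) with hu
  have hupos : ∀ n, 0 < u n := fun n => hN₀ (n + N₀) (Nat.le_add_left _ _)
  have hut : Tendsto u atTop (𝓝 0) := by
    have h0 : Tendsto ns (atTop) (𝓝 (0:ℝ)) := hns.mono_right nhdsWithin_le_nhds
    exact h0.comp (tendsto_add_atTop_nat N₀)
  have hKt : Tendsto (fun n => ‖K (xδ (u n)) - ydag‖) atTop (𝓝 0) := by
    have h2 : Tendsto (fun n => 2 * u n) atTop (𝓝 0) := by
      simpa using hut.const_mul 2
    refine squeeze_zero (fun n => norm_nonneg _) (fun n => hKbound (u n) (hupos n)) h2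
  obtain ⟨φ, hφmono, hφt⟩ := EN_core K ydag η hη xdag ⟨hd1, hdK, hdmin⟩
    (fun n => xδ (u n)) (fun n => hinL1 (u n) (hupos n))
    (fun n => hRbound (u n) (hupos n)) hKt
  exact ⟨fun k => φ k + N₀, hφt⟩
end
end
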